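/- Let a < 0 be squarefree, b a prime with b ≠ 3, b ∤ a. Suppose there exist rational numbers x, y, z, t with (x² - a y²) - b(z² - a t²) = 1 and 2x ∈ {-1, 0, 1}. Then one of a, -a, -3a is a quadratic residue modulo b. -/
import Mathlib

lemma aux_elliptic (a : ℤ) (b : ℕ) (hb : b.Prime) (hb3 : b ≠ 3) :
    ∀ q : ℕ, 0 < q → ∀ X Y Z T : ℤ,
      X ^ 2 - a * Y ^ 2 - (b : ℤ) * (Z ^ 2 - a * T ^ 2) = (q : ℤ) ^ 2 →
      (2 * X = -(q : ℤ) ∨ 2 * X = 0 ∨ 2 * X = (q : ℤ)) →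
      IsSquare ((a : ZMod b)) ∨ IsSquare (((-a : ℤ) : ZMod b)) ∨
        IsSquare (((-3 * a : ℤ) : ZMod b)) := by
  haveI : Fact b.Prime := ⟨hb⟩
  have hbne : (b : ℤ) ≠ 0 := by exact_mod_cast hb.ne_zero
  have h3ne : (3 : ZMod b) ≠ 0 := by
    intro h
    have h3 : ((3 : ℕ) : ZMod b) = 0 := by push_cast; exact h
    have hd3 : b ∣ 3 := (ZMod.natCast_eq_zero_iff 3 b).mp h3
    rcases (Nat.prime_three).eq_one_or_self_of_dvd b hd3 with h1 | h1
    · exact hb.ne_one h1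
    · exact hb3 h1
  intro q
  induction q using Nat.strong_induction_on with
  | _ q ih =>
  intro hq X Y Z T heq htr
  -- reduce mod b
  have hmod : (X : ZMod b) ^ 2 - (a : ZMod b) * (Y : ZMod b) ^ 2 = (q : ZMod b) ^ 2 := by
    have := congrArg (fun n : ℤ => (n : ZMod b)) heq
    push_cast at this
    rw [ZMod.natCast_self] at this
    linear_combination this
  -- common final step after knowing b ∣ X, b ∣ Y, b ∣ q
  have final : (b : ℤ) ∣ X → (b : ℤ) ∣ Y → b ∣ q →
      IsSquare ((a : ZMod b)) ∨ IsSquare (((-a : ℤ) : ZMod b)) ∨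
        IsSquare (((-3 * a : ℤ) : ZMod b)) := by
    rintro ⟨X', rfl⟩ ⟨Y', rfl⟩ ⟨q', rfl⟩
    have hZT : (b : ℤ) ∣ (Z ^ 2 - a * T ^ 2) := by
      refine ⟨X' ^ 2 - a * Y' ^ 2 - (q' : ℤ) ^ 2, ?_⟩
      refine mul_left_cancel₀ hbne ?_
      push_cast at heq ⊢; linear_combination -heq
    have hZTmod : (Z : ZMod b) ^ 2 = (a : ZMod b) * (T : ZMod b) ^ 2 := by
      have h0 : ((Z ^ 2 - a * T ^ 2 : ℤ) : ZMod b) = 0 :=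
        (ZMod.intCast_zmod_eq_zero_iff_dvd _ b).mpr hZT
      push_cast at h0
      linear_combination h0
    by_cases hT : (T : ZMod b) = 0
    · -- then Z ≡ 0 too, full descent
      have hZ0 : (Z : ZMod b) = 0 := by
        have h2 : (Z : ZMod b) ^ 2 = 0 := by rw [hZTmod, hT]; ring
        exact pow_eq_zero_iff (by norm_num) |>.mp h2
      obtain ⟨Z', rfl⟩ := (ZMod.intCast_zmod_eq_zero_iff_dvd Z b).mp hZ0
      obtain ⟨T', rfl⟩ := (ZMod.intCast_zmod_eq_zero_iff_dvd T b).mp hT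
      have hq'pos : 0 < q' := by
        rcases Nat.eq_zero_or_pos q' with h | h
        · subst h; simp at hq
        · exact h
      have hq'lt : q' < b * q' := by
        have h2 := hb.two_le; nlinarith
      have hnew : X' ^ 2 - a * Y' ^ 2 - (b : ℤ) * (Z' ^ 2 - a * T' ^ 2) = (q' : ℤ) ^ 2 := by
        refine mul_left_cancel₀ (pow_ne_zero 2 hbne) ?_
        push_cast at heq ⊢; linear_combination heq
      refine ih q' hq'lt hq'pos X' Y' Z' T' hnew ?_
      rcases htr with h | h | h
      · left
        refine mul_left_cancel₀ hbne ?_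
        push_cast at h ⊢; linarith
      · right; left
        refine mul_left_cancel₀ hbne ?_
        push_cast at h ⊢; linarith
      · right; right
        refine mul_left_cancel₀ hbne ?_
        push_cast at h ⊢; linarith
    · -- a is a square
      left
      have hTinv : (T : ZMod b) * (T : ZMod b)⁻¹ = 1 := mul_inv_cancel₀ hT
      refine ⟨(Z : ZMod b) * (T : ZMod b)⁻¹, ?_⟩
      linear_combination (-((T : ZMod b)⁻¹) ^ 2) * hZTmod -
        ((a : ZMod b) * ((T : ZMod b) * (T : ZMod b)⁻¹ + 1)) * hTinv
  -- main case analysis on the trace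
  by_cases hY : (Y : ZMod b) = 0
  · -- descend: show b ∣ X, b ∣ Y, b ∣ q
    have hYd : (b : ℤ) ∣ Y := (ZMod.intCast_zmod_eq_zero_iff_dvd Y b).mp hY
    rcases htr with h | h | h
    · -- 2X = -q : use 4X² = q²
      have hx2 : (2 * X) ^ 2 = (q : ℤ) ^ 2 := by rw [h]; ring
      have hX0 : (X : ZMod b) = 0 := by
        have h3X : (3 : ZMod b) * (X : ZMod b) ^ 2 = 0 := by
          have : (4 : ZMod b) * (X : ZMod b) ^ 2 = (q : ZMod b) ^ 2 := by
            have := congrArg (fun n : ℤ => (n : ZMod b)) hx2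
            push_cast at this; linear_combination this
          rw [hY] at hmod
          linear_combination this - hmod
        have := mul_eq_zero.mp h3X
        rcases this with h' | h'
        · exact absurd h' h3ne
        · exact pow_eq_zero_iff (by norm_num) |>.mp h'
      have hXd : (b : ℤ) ∣ X := (ZMod.intCast_zmod_eq_zero_iff_dvd X b).mp hX0
      have hqd : b ∣ q := by
        have : (b : ℤ) ∣ (q : ℤ) := by
          have : (q : ℤ) = -(2 * X) := by linarith
          rw [this]; exact dvd_neg.mpr (hXd.mul_left 2)
        exact_mod_cast this
      exact final hXd hYd hqd
    · -- 2X = 0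
      have hX : X = 0 := by linarith
      subst hX
      have hq0 : (q : ZMod b) = 0 := by
        have h2 : (q : ZMod b) ^ 2 = 0 := by
          rw [hY] at hmod; linear_combination -hmod
        exact pow_eq_zero_iff (by norm_num) |>.mp h2
      have hqd : b ∣ q := (ZMod.natCast_eq_zero_iff q b).mp hq0
      exact final ⟨0, by ring⟩ hYd hqd
    · have hx2 : (2 * X) ^ 2 = (q : ℤ) ^ 2 := by rw [h]
      have hX0 : (X : ZMod b) = 0 := by
        have h3X : (3 : ZMod b) * (X : ZMod b) ^ 2 = 0 := by
          have : (4 : ZMod b) * (X : ZMod b) ^ 2 = (q : ZMod b) ^ 2 := by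
            have := congrArg (fun n : ℤ => (n : ZMod b)) hx2
            push_cast at this; linear_combination this
          rw [hY] at hmod
          linear_combination this - hmod
        have := mul_eq_zero.mp h3X
        rcases this with h' | h'
        · exact absurd h' h3ne
        · exact pow_eq_zero_iff (by norm_num) |>.mp h'
      have hXd : (b : ℤ) ∣ X := (ZMod.intCast_zmod_eq_zero_iff_dvd X b).mp hX0
      have hqd : b ∣ q := by
        have : (b : ℤ) ∣ (q : ℤ) := by
          have : (q : ℤ) = 2 * X := by linarith
          rw [this]; exact hXd.mul_left 2
        exact_mod_cast this
      exact final hXd hYd hqd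
  · -- Y invertible mod b
    rcases htr with h | h | h
    ·
      right; right
      have hx2 : (2 * X) ^ 2 = (q : ℤ) ^ 2 := by rw [h]; ring
      have hq2 : (q : ZMod b) ^ 2 = (4 : ZMod b) * (X : ZMod b) ^ 2 := by
        have := congrArg (fun n : ℤ => (n : ZMod b)) hx2
        push_cast at this; linear_combination -this
      have hA : -(a : ZMod b) * (Y : ZMod b) ^ 2 = 3 * (X : ZMod b) ^ 2 := by
        linear_combination hmod + hq2
      have hYinv : (Y : ZMod b) * (Y : ZMod b)⁻¹ = 1 := mul_inv_cancel₀ hY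
      refine ⟨3 * (X : ZMod b) * (Y : ZMod b)⁻¹, ?_⟩
      push_cast
      linear_combination (3 * ((Y : ZMod b)⁻¹) ^ 2) * hA +
        (3 * (a : ZMod b) * ((Y : ZMod b) * (Y : ZMod b)⁻¹ + 1)) * hYinv
    · -- -a is a square
      right; left
      have hX : X = 0 := by linarith
      subst hX
      have hA : -(a : ZMod b) * (Y : ZMod b) ^ 2 = (q : ZMod b) ^ 2 := by
        linear_combination hmod
      have hYinv : (Y : ZMod b) * (Y : ZMod b)⁻¹ = 1 := mul_inv_cancel₀ hY
      refine ⟨(q : ZMod b) * (Y : ZMod b)⁻¹, ?_⟩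
      push_cast
      linear_combination (((Y : ZMod b)⁻¹) ^ 2) * hA +
        ((a : ZMod b) * ((Y : ZMod b) * (Y : ZMod b)⁻¹ + 1)) * hYinv
    · right; right
      have hx2 : (2 * X) ^ 2 = (q : ℤ) ^ 2 := by rw [h]
      have hq2 : (q : ZMod b) ^ 2 = (4 : ZMod b) * (X : ZMod b) ^ 2 := by
        have := congrArg (fun n : ℤ => (n : ZMod b)) hx2
        push_cast at this; linear_combination -this
      have hA : -(a : ZMod b) * (Y : ZMod b) ^ 2 = 3 * (X : ZMod b) ^ 2 := by
        linear_combination hmod + hq2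
      have hYinv : (Y : ZMod b) * (Y : ZMod b)⁻¹ = 1 := mul_inv_cancel₀ hY
      refine ⟨3 * (X : ZMod b) * (Y : ZMod b)⁻¹, ?_⟩
      push_cast
      linear_combination (3 * ((Y : ZMod b)⁻¹) ^ 2) * hA +
        (3 * (a : ZMod b) * ((Y : ZMod b) * (Y : ZMod b)⁻¹ + 1)) * hYinv

/-- Elliptic elements in the unit group of an order in (a,b/ℚ): if the norm
equation (x² - a y²) - b(z² - a t²) = 1 has a rational solution with
2x ∈ {-1,0,1}, then one of a, -a, -3a is a quadratic residue modulo b. -/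
theorem elliptic_implies_square
    (a : ℤ) (hsf : Squarefree a) (hneg : a < 0)
    (b : ℕ) (hb : b.Prime) (hb3 : b ≠ 3) (hba : ¬ ((b : ℤ) ∣ a))
    (x y z t : ℚ)
    (heq : (x ^ 2 - (a : ℚ) * y ^ 2) - (b : ℚ) * (z ^ 2 - (a : ℚ) * t ^ 2) = 1)
    (htr : 2 * x = -1 ∨ 2 * x = 0 ∨ 2 * x = 1) :
    IsSquare ((a : ZMod b)) ∨ IsSquare (((-a : ℤ) : ZMod b)) ∨
      IsSquare (((-3 * a : ℤ) : ZMod b)) := by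
  set d : ℕ := x.den * y.den * z.den * t.den with hd
  have hdpos : 0 < d := by positivity
  set X : ℤ := x.num * (y.den * z.den * t.den) with hX
  set Y : ℤ := y.num * (x.den * z.den * t.den) with hYdef
  set Z : ℤ := z.num * (x.den * y.den * t.den) with hZdef
  set T : ℤ := t.num * (x.den * y.den * z.den) with hTdef
  have hnum : ∀ r : ℚ, (r.num : ℚ) = r * (r.den : ℚ) := fun r =>
    (div_eq_iff (by exact_mod_cast r.den_ne_zero : ((r.den : ℚ)) ≠ 0)).mp (Rat.num_div_den r)
  have castX : (X : ℚ) = x * d := by rw [hX, hd]; push_cast; rw [hnum x]; ring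
  have castY : (Y : ℚ) = y * d := by rw [hYdef, hd]; push_cast; rw [hnum y]; ring
  have castZ : (Z : ℚ) = z * d := by rw [hZdef, hd]; push_cast; rw [hnum z]; ring
  have castT : (T : ℚ) = t * d := by rw [hTdef, hd]; push_cast; rw [hnum t]; ring
  have heqZ : X ^ 2 - a * Y ^ 2 - (b : ℤ) * (Z ^ 2 - a * T ^ 2) = (d : ℤ) ^ 2 := by
    have hQ : (X : ℚ) ^ 2 - a * (Y : ℚ) ^ 2 - (b : ℚ) * ((Z : ℚ) ^ 2 - a * (T : ℚ) ^ 2)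
        = (d : ℚ) ^ 2 := by
      rw [castX, castY, castZ, castT]
      linear_combination (d : ℚ) ^ 2 * heq
    exact_mod_cast hQ
  have htrZ : 2 * X = -(d : ℤ) ∨ 2 * X = 0 ∨ 2 * X = (d : ℤ) := by
    rcases htr with h | h | h
    · left
      have : 2 * (X : ℚ) = -(d : ℚ) := by rw [castX]; linear_combination (d : ℚ) * h
      exact_mod_cast this
    · right; left
      have : 2 * (X : ℚ) = 0 := by rw [castX]; linear_combination (d : ℚ) * h
      exact_mod_cast this
    · right; right
      have : 2 * (X : ℚ) = (d : ℚ) := by rw [castX]; linear_combination (d : ℚ) * h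
      exact_mod_cast this
  exact aux_elliptic a b hb hb3 d hdpos X Y Z T heqZ htrZ
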